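/- For all real numbers μ > 1, T ∈ (0,1) and y ≥ 0, the equation −μ·(μ + T) + (1 − T²) = √(μ²−1)·(μ + T)·tanh(y) has no solution: indeed the left-hand side satisfies −μ(μ+T) + 1 − T² ≤ −T − T² < 0, while the right-hand side is ≥ 0. Consequently, for γ = 0 and d = 0 the linearisation L_pin about the unique pinned fluxon with half-length L > 0 has no eigenvalue Λ > 0. -/

import Mathlib

open Real Filter Topology

/-- The piecewise-constant Josephson tunneling critical current:
`D(x) = d` for `|x| < L` and `D(x) = 1` for `|x| > L`. -/
noncomputable def Dfun (L d : ℝ) (x : ℝ) : ℝ := if |x| < L then d else 1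

/-- A pinned fluxon for parameters `(L, d, γ)`. -/
def IsPinnedFluxon (L d γ : ℝ) (φ : ℝ → ℝ) : Prop :=
  ContDiff ℝ 1 φ ∧
  (∀ x : ℝ, x ≠ -L → x ≠ L →
    ∃ φ'' : ℝ, HasDerivAt (deriv φ) φ'' x ∧
      φ'' - Dfun L d x * Real.sin (φ x) + γ = 0) ∧
  Tendsto φ atBot (𝓝 (Real.arcsin γ)) ∧
  Tendsto φ atTop (𝓝 (Real.arcsin γ + 2 * π)) ∧
  Tendsto (deriv φ) atBot (𝓝 0) ∧
  Tendsto (deriv φ) atTop (𝓝 0)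

/-- `ψ` is an eigenfunction of the linearisation about `φpin` with eigenvalue `Λ`. -/
def IsEigenfun (L d γ : ℝ) (φpin : ℝ → ℝ) (Λ : ℝ) (ψ : ℝ → ℝ) : Prop :=
  ψ ≠ 0 ∧ ContDiff ℝ 1 ψ ∧
  (∀ x : ℝ, x ≠ -L → x ≠ L →
    ∃ ψ'' : ℝ, HasDerivAt (deriv ψ) ψ'' x ∧
      ψ'' - Dfun L d x * Real.cos (φpin x) * ψ x = Λ * ψ x) ∧
  Tendsto ψ atBot (𝓝 0) ∧ Tendsto ψ atTop (𝓝 0) ∧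
  Tendsto (deriv ψ) atBot (𝓝 0) ∧ Tendsto (deriv ψ) atTop (𝓝 0)

/-- `Λ` is an eigenvalue of the linearisation `L_pin` about the pinned fluxon `φpin`. -/
def IsEigenvalue (L d γ : ℝ) (φpin : ℝ → ℝ) (Λ : ℝ) : Prop :=
  ∃ ψ : ℝ → ℝ, IsEigenfun L d γ φpin Λ ψ

open Set

lemma constOn' {f : ℝ → ℝ} {a b : ℝ} (hab : a ≤ b) (hc : ContinuousOn f (Icc a b))
    (hd : ∀ x ∈ Ioo a b, HasDerivAt f 0 x) : f b = f a := by
  have hdiff : DifferentiableOn ℝ f (interior (Icc a b)) := by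
    rw [interior_Icc]; exact fun x hx => ((hd x hx).differentiableAt).differentiableWithinAt
  have h1 : MonotoneOn f (Icc a b) := by
    refine monotoneOn_of_deriv_nonneg (convex_Icc a b) hc hdiff ?_
    intro x hx; rw [interior_Icc] at hx; rw [(hd x hx).deriv]
  have h2 : AntitoneOn f (Icc a b) := by
    refine antitoneOn_of_deriv_nonpos (convex_Icc a b) hc hdiff ?_
    intro x hx; rw [interior_Icc] at hx; rw [(hd x hx).deriv]
  exact le_antisymm (h2 (left_mem_Icc.2 hab) (right_mem_Icc.2 hab) hab)
    (h1 (left_mem_Icc.2 hab) (right_mem_Icc.2 hab) hab)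

lemma monoOn' {f f' : ℝ → ℝ} {a b : ℝ} (hc : ContinuousOn f (Icc a b))
    (hd : ∀ x ∈ Ioo a b, HasDerivAt f (f' x) x) (h0 : ∀ x ∈ Ioo a b, 0 ≤ f' x) :
    MonotoneOn f (Icc a b) := by
  refine monotoneOn_of_deriv_nonneg (convex_Icc a b) hc ?_ ?_
  · rw [interior_Icc]; exact fun x hx => ((hd x hx).differentiableAt).differentiableWithinAt
  · intro x hx; rw [interior_Icc] at hx; rw [(hd x hx).deriv]; exact h0 x hx

lemma gron' {f f' : ℝ → ℝ} {a b : ℝ} (hc : Continuous f)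
    (hd : ∀ x ∈ Ico a b, HasDerivAt f (f' x) x)
    (ha : f a = 0) (bound : ∀ x ∈ Ico a b, |f' x| ≤ |f x|) :
    ∀ x ∈ Icc a b, f x = 0 := by
  have h := norm_le_gronwallBound_of_norm_deriv_right_le (f := f) (f' := f') (δ := 0) (K := 1)
    (ε := 0) hc.continuousOn (fun x hx => (hd x hx).hasDerivWithinAt)
    (by simp [ha]) (fun x hx => by simpa using bound x hx)
  intro x hx
  have h2 := h x hx
  rw [gronwallBound_ε0_δ0] at h2
  exact norm_le_zero_iff.mp h2

lemma abs_le_abs_of_sq_le_sq' {a b : ℝ} (h : a^2 ≤ b^2) : |a| ≤ |b| := by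
  rw [← Real.sqrt_sq_eq_abs, ← Real.sqrt_sq_eq_abs]; exact Real.sqrt_le_sqrt h

lemma two_sub_two_cos_le {θ c : ℝ} (hc : Real.cos c = 1) : 2 - 2 * Real.cos θ ≤ (θ - c)^2 := by
  obtain ⟨n, hn⟩ := (Real.cos_eq_one_iff c).1 hc
  have hper : Real.cos (θ - c) = Real.cos θ := by rw [← hn]; exact Real.cos_sub_int_mul_two_pi θ n
  have h1 : Real.sin ((θ - c)/2) ^ 2 = 1/2 - Real.cos (θ - c) / 2 := by
    have := Real.sin_sq_eq_half_sub ((θ - c)/2)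
    rw [this]; ring_nf
  have h2 : |Real.sin ((θ-c)/2)| ≤ |(θ-c)/2| := Real.abs_sin_le_abs
  have h3 : Real.sin ((θ-c)/2)^2 ≤ ((θ-c)/2)^2 := by
    have := mul_self_le_mul_self (abs_nonneg _) h2
    rw [abs_mul_abs_self, abs_mul_abs_self] at this
    nlinarith [this]
  nlinarith [h1, h3, hper]

lemma fluxon_facts {L : ℝ} (hL : 0 < L) {φ : ℝ → ℝ} (hφ : IsPinnedFluxon L 0 0 φ) :
    (∀ x, 0 < deriv φ x) ∧ 0 ≤ Real.sin (φ (-L)) ∧ Real.sin (φ L) ≤ 0 := by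
  obtain ⟨hφ1, hφ2, hφ3, hφ4, hφ5, hφ6⟩ := hφ
  rw [Real.arcsin_zero] at hφ3 hφ4
  rw [zero_add] at hφ4
  have hdiff : Differentiable ℝ φ := hφ1.differentiable one_ne_zero
  have hucont : Continuous (deriv φ) := hφ1.continuous_deriv le_rfl
  have hφx : ∀ x, HasDerivAt φ (deriv φ x) x := fun x => (hdiff x).hasDerivAt
  have habsL : |(-L : ℝ)| = L := by rw [abs_neg, abs_of_pos hL]
  have habsL' : |(L : ℝ)| = L := abs_of_pos hL
  have hne : ∀ x : ℝ, |x| ≠ L → x ≠ -L ∧ x ≠ L := by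
    intro x hx
    constructor
    · rintro rfl; exact hx habsL
    · rintro rfl; exact hx habsL'
  have hODE : ∀ x, x ≠ -L → x ≠ L → HasDerivAt (deriv φ) (Dfun L 0 x * Real.sin (φ x)) x := by
    intro x h1 h2
    obtain ⟨c, hc, he⟩ := hφ2 x h1 h2
    have : c = Dfun L 0 x * Real.sin (φ x) := by linarith
    rwa [this] at hc
  have hODEtail : ∀ x : ℝ, L < |x| → HasDerivAt (deriv φ) (Real.sin (φ x)) x := by
    intro x hx
    obtain ⟨h1, h2⟩ := hne x (ne_of_gt hx)
    have := hODE x h1 h2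
    rw [Dfun, if_neg (not_lt.mpr hx.le), one_mul] at this
    exact this
  have hODEin : ∀ x : ℝ, |x| < L → HasDerivAt (deriv φ) 0 x := by
    intro x hx
    obtain ⟨h1, h2⟩ := hne x (ne_of_lt hx)
    have := hODE x h1 h2
    rw [Dfun, if_pos hx, zero_mul] at this
    exact this
  -- energy function
  set E : ℝ → ℝ := fun x => (deriv φ x)^2 + 2 * Real.cos (φ x) with hE
  have hEcont : Continuous E := by
    exact (hucont.pow 2).add (continuous_const.mul (Real.continuous_cos.comp hφ1.continuous))
  have hE' : ∀ x : ℝ, L < |x| → HasDerivAt E 0 x := by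
    intro x hx
    have h1 := (hODEtail x hx).fun_pow 2
    have h2 : HasDerivAt (fun y => 2 * Real.cos (φ y)) (2 * (-Real.sin (φ x) * deriv φ x)) x :=
      ((Real.hasDerivAt_cos (φ x)).comp x (hφx x)).const_mul 2
    have h3 := h1.fun_add h2
    exact h3.congr_deriv (by push_cast; ring)
  have hEr : ∀ x : ℝ, L ≤ x → E x = E L := by
    intro x hx
    refine constOn' hx hEcont.continuousOn ?_
    intro t ht
    exact hE' t (by rw [abs_of_pos (lt_trans hL ht.1)]; exact ht.1)
  have hEl : ∀ x : ℝ, x ≤ -L → E x = E (-L) := by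
    intro x hx
    have := constOn' hx hEcont.continuousOn (fun t ht => hE' t (by
      rw [abs_of_neg (by linarith [ht.2] : t < 0)]; linarith [ht.2]))
    exact this.symm
  have hELval : E L = 2 := by
    have h1 : Tendsto E atTop (𝓝 (0^2 + 2 * Real.cos (2*π))) := by
      exact (hφ6.pow 2).add (((Real.continuous_cos.tendsto _).comp hφ4).const_mul 2)
    have h2 : Tendsto E atTop (𝓝 (E L)) := by
      refine Tendsto.congr' ?_ tendsto_const_nhds
      filter_upwards [eventually_ge_atTop L] with x hx
      exact (hEr x hx).symm
    have := tendsto_nhds_unique h2 h1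
    rw [this, Real.cos_two_pi]; norm_num
  have hELval' : E (-L) = 2 := by
    have h1 : Tendsto E atBot (𝓝 (0^2 + 2 * Real.cos 0)) := by
      exact (hφ5.pow 2).add (((Real.continuous_cos.tendsto _).comp hφ3).const_mul 2)
    have h2 : Tendsto E atBot (𝓝 (E (-L))) := by
      refine Tendsto.congr' ?_ tendsto_const_nhds
      filter_upwards [eventually_le_atBot (-L)] with x hx
      exact (hEl x hx).symm
    have := tendsto_nhds_unique h2 h1
    rw [this, Real.cos_zero]; norm_num
  have hEr2 : ∀ x : ℝ, L ≤ x → (deriv φ x)^2 = 2 - 2 * Real.cos (φ x) := by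
    intro x hx; have := hEr x hx; rw [hELval] at this; simp only [hE] at this; linarith
  have hEl2 : ∀ x : ℝ, x ≤ -L → (deriv φ x)^2 = 2 - 2 * Real.cos (φ x) := by
    intro x hx; have := hEl x hx; rw [hELval'] at this; simp only [hE] at this; linarith
  -- u constant inside
  have huc : ∀ x ∈ Icc (-L) L, deriv φ x = deriv φ (-L) := by
    intro x hx
    refine constOn' hx.1 hucont.continuousOn ?_
    intro t ht
    exact hODEin t (abs_lt.mpr ⟨ht.1, lt_of_lt_of_le ht.2 hx.2⟩)

  -- propagation helpers
  have fwd : ∀ a b : ℝ, (∀ t, a ≤ t → t ≤ b → (deriv φ t)^2 = 2 - 2*Real.cos (φ t)) →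
      Real.cos (φ a) = 1 → ∀ s ∈ Icc a b, φ s = φ a := by
    intro a b hEn hca
    have key := gron' (a := a) (b := b) (f := fun t => φ t - φ a) (f' := fun t => deriv φ t)
      (hφ1.continuous.sub continuous_const)
      (fun t _ => (hφx t).sub_const _) (by simp)
      (fun t ht => by
        have h1 := hEn t ht.1 ht.2.le
        have h2 := two_sub_two_cos_le (θ := φ t) hca
        exact abs_le_abs_of_sq_le_sq' (by rw [h1]; exact h2))
    intro s hs
    have := key s hs
    exact sub_eq_zero.mp this
  have bwd : ∀ a b : ℝ, (∀ t, a ≤ t → t ≤ b → (deriv φ t)^2 = 2 - 2*Real.cos (φ t)) →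
      Real.cos (φ b) = 1 → ∀ s ∈ Icc a b, φ s = φ b := by
    intro a b hEn hcb
    have hinner : ∀ t : ℝ, HasDerivAt (fun t => φ (a + b - t) - φ b)
        (deriv φ (a + b - t) * (-1)) t := by
      intro t
      have h1 : HasDerivAt (fun t : ℝ => a + b - t) (-1) t := by
        simpa using (hasDerivAt_id t).const_sub (a + b)
      exact ((hφx (a + b - t)).comp t h1).sub_const _
    have key := gron' (a := a) (b := b) (f := fun t => φ (a + b - t) - φ b)
      (f' := fun t => deriv φ (a + b - t) * (-1))
      (((hφ1.continuous.comp (continuous_const.sub continuous_id)).sub continuous_const))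
      (fun t _ => hinner t) (by simp)
      (fun t ht => by
        have harg1 : a ≤ a + b - t := by linarith [ht.2]
        have harg2 : a + b - t ≤ b := by linarith [ht.1]
        have h1 := hEn _ harg1 harg2
        have h2 := two_sub_two_cos_le (θ := φ (a + b - t)) hcb
        have h3 : |deriv φ (a + b - t) * (-1)| = |deriv φ (a + b - t)| := by
          rw [abs_mul]; simp
        rw [h3]
        exact abs_le_abs_of_sq_le_sq' (by rw [h1]; exact h2))
    intro s hs
    have h4 : φ (a + b - (a + b - s)) - φ b = 0 :=
      key (a + b - s) ⟨by linarith [hs.2], by linarith [hs.1]⟩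
    have h5 : a + b - (a + b - s) = s := by ring
    rw [h5] at h4
    exact sub_eq_zero.mp h4
  -- deriv φ (-L) = 0 leads to contradiction
  have key0 : deriv φ (-L) = 0 → False := by
    intro hNL
    have hcL : Real.cos (φ (-L)) = 1 := by
      have := hEl2 (-L) le_rfl; rw [hNL] at this; nlinarith
    have hleft : ∀ s, s ≤ -L → φ s = φ (-L) := fun s hs =>
      bwd s (-L) (fun t _ ht2 => hEl2 t ht2) hcL s ⟨le_rfl, hs⟩
    have hbot : Tendsto φ atBot (𝓝 (φ (-L))) := by
      refine Tendsto.congr' ?_ tendsto_const_nhds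
      filter_upwards [eventually_le_atBot (-L)] with s hs
      exact (hleft s hs).symm
    have hφL0 : φ (-L) = 0 := tendsto_nhds_unique hbot hφ3
    have hmid : φ L = φ (-L) := by
      refine constOn' (by linarith) hφ1.continuous.continuousOn ?_
      intro u hu
      have h0 : deriv φ u = 0 := by rw [huc u ⟨hu.1.le, hu.2.le⟩, hNL]
      exact h0 ▸ hφx u
    have hcL2 : Real.cos (φ L) = 1 := by rw [hmid, hφL0, Real.cos_zero]
    have hright : ∀ s, L ≤ s → φ s = φ L := fun s hs =>
      fwd L s (fun t ht1 _ => hEr2 t ht1) hcL2 s ⟨hs, le_rfl⟩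
    have htop : Tendsto φ atTop (𝓝 (φ L)) := by
      refine Tendsto.congr' ?_ tendsto_const_nhds
      filter_upwards [eventually_ge_atTop L] with s hs
      exact (hright s hs).symm
    have hfin : φ L = 2 * π := tendsto_nhds_unique htop hφ4
    rw [hmid, hφL0] at hfin
    linarith [Real.pi_pos]
  have hu0 : ∀ x, deriv φ x ≠ 0 := by
    intro x₀ hx₀
    apply key0
    rcases le_or_gt x₀ (-L) with h | h
    · have hc1 : Real.cos (φ x₀) = 1 := by
        have := hEl2 x₀ h; rw [hx₀] at this; nlinarith
      have heq : φ (-L) = φ x₀ := fwd x₀ (-L) (fun t _ ht2 => hEl2 t ht2) hc1 (-L) ⟨h, le_rfl⟩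
      have h3 : (deriv φ (-L))^2 = 0 := by rw [hEl2 (-L) le_rfl, heq, hc1]; ring
      exact pow_eq_zero_iff two_ne_zero |>.mp h3
    · rcases le_or_gt x₀ L with h2 | h2
      · rw [← huc x₀ ⟨h.le, h2⟩]; exact hx₀
      · have hc1 : Real.cos (φ x₀) = 1 := by
          have := hEr2 x₀ h2.le; rw [hx₀] at this; nlinarith
        have hLx : φ L = φ x₀ := bwd L x₀ (fun t ht1 _ => hEr2 t ht1) hc1 L ⟨le_rfl, h2.le⟩
        have h3 : (deriv φ L)^2 = 0 := by rw [hEr2 L le_rfl, hLx, hc1]; ring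
        have h4 : deriv φ L = 0 := pow_eq_zero_iff two_ne_zero |>.mp h3
        rw [← huc L ⟨by linarith, le_rfl⟩]; exact h4
  have hupos : ∀ x, 0 < deriv φ x := by
    by_contra hcon
    push_neg at hcon
    obtain ⟨z, hz⟩ := hcon
    have hzneg : deriv φ z < 0 := lt_of_le_of_ne hz (hu0 z)
    have hall : ∀ x, deriv φ x < 0 := by
      intro x
      rcases lt_trichotomy (deriv φ x) 0 with h | h | h
      · exact h
      · exact absurd h (hu0 x)
      · exfalso
        rcases le_total z x with hzx | hzx
        · obtain ⟨c, _, hc⟩ := intermediate_value_Icc hzx hucont.continuousOn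
            ⟨hzneg.le, h.le⟩
          exact hu0 c hc
        · obtain ⟨c, _, hc⟩ := intermediate_value_Icc' hzx hucont.continuousOn
            ⟨hzneg.le, h.le⟩
          exact hu0 c hc
    have hanti : Antitone φ := antitone_of_deriv_nonpos hdiff (fun x => (hall x).le)
    have h1 : ∀ x, φ x ≤ 0 := by
      intro x
      refine ge_of_tendsto hφ3 ?_
      filter_upwards [eventually_le_atBot x] with u hu
      exact hanti hu
    have h2 : 2*π ≤ 0 := le_of_tendsto hφ4 (Eventually.of_forall h1)
    linarith [Real.pi_pos]
  have hmono : StrictMono φ := strictMono_of_deriv_pos hupos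
  have hub : ∀ x, φ x < 2*π := by
    intro x
    have h1 : φ (x+1) ≤ 2*π := by
      refine ge_of_tendsto hφ4 ?_
      filter_upwards [eventually_ge_atTop (x+1)] with u hu
      exact hmono.monotone hu
    exact lt_of_lt_of_le (hmono (lt_add_one x)) h1
  have hlb : ∀ x, 0 < φ x := by
    intro x
    have h1 : 0 ≤ φ (x-1) := by
      refine le_of_tendsto hφ3 ?_
      filter_upwards [eventually_le_atBot (x-1)] with u hu
      exact hmono.monotone hu
    exact lt_of_le_of_lt h1 (hmono (by linarith))
  have hcoseq : Real.cos (φ (-L)) = Real.cos (φ L) := by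
    have h1 := hEl2 (-L) le_rfl
    have h2 := hEr2 L le_rfl
    have h3 := huc L ⟨by linarith, le_rfl⟩
    rw [h3] at h2
    linarith
  have horder : φ (-L) < φ L := hmono (by linarith)
  rcases le_or_gt (φ L) π with hcase | hcase
  · exfalso
    exact absurd (Real.injOn_cos ⟨(hlb _).le, le_trans horder.le hcase⟩
      ⟨(hlb _).le, hcase⟩ hcoseq) horder.ne
  · rcases le_or_gt (φ (-L)) π with hs | hs
    · have heq : φ (-L) = 2*π - φ L := by
        refine Real.injOn_cos ⟨(hlb _).le, hs⟩ ⟨by linarith [hub L], by linarith⟩ ?_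
        rw [Real.cos_two_pi_sub]
        exact hcoseq
      have hsin_s : 0 < Real.sin (φ (-L)) :=
        Real.sin_pos_of_pos_of_lt_pi (hlb _) (by rw [heq]; linarith)
      refine ⟨hupos, hsin_s.le, ?_⟩
      rw [show φ L = 2*π - φ (-L) by linarith, Real.sin_two_pi_sub]
      linarith
    · exfalso
      have heq : 2*π - φ (-L) = 2*π - φ L := by
        refine Real.injOn_cos ⟨by linarith [hub (-L)], by linarith⟩
          ⟨by linarith [hub L], by linarith⟩ ?_
        rw [Real.cos_two_pi_sub, Real.cos_two_pi_sub]
        exact hcoseq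
      exact absurd (by linarith : φ (-L) = φ L) horder.ne

lemma eig_false {L Λ : ℝ} (hL : 0 < L) (hΛ : 0 < Λ) {φ ψ : ℝ → ℝ}
    (hφ1 : ContDiff ℝ 1 φ)
    (hODEφ : ∀ x, x ≠ -L → x ≠ L → HasDerivAt (deriv φ) (Dfun L 0 x * Real.sin (φ x)) x)
    (hupos : ∀ x, 0 < deriv φ x)
    (hubot : Tendsto (deriv φ) atBot (𝓝 0)) (hutop : Tendsto (deriv φ) atTop (𝓝 0))
    (hsm : 0 ≤ Real.sin (φ (-L))) (hsL : Real.sin (φ L) ≤ 0)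
    (hψ1 : ContDiff ℝ 1 ψ)
    (hODEψ : ∀ x, x ≠ -L → x ≠ L →
      HasDerivAt (deriv ψ) (Λ * ψ x + Dfun L 0 x * Real.cos (φ x) * ψ x) x)
    (hψbot : Tendsto ψ atBot (𝓝 0)) (hψtop : Tendsto ψ atTop (𝓝 0))
    (hψ'bot : Tendsto (deriv ψ) atBot (𝓝 0)) (hψ'top : Tendsto (deriv ψ) atTop (𝓝 0))
    {x₀ : ℝ} (hx₀ : 0 < ψ x₀) : False := by
  have hφdiff : Differentiable ℝ φ := hφ1.differentiable one_ne_zero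
  have hψdiff : Differentiable ℝ ψ := hψ1.differentiable one_ne_zero
  have hucont : Continuous (deriv φ) := hφ1.continuous_deriv le_rfl
  have hψ'cont : Continuous (deriv ψ) := hψ1.continuous_deriv le_rfl
  have hψcont : Continuous ψ := hψ1.continuous
  have hφx : ∀ x, HasDerivAt φ (deriv φ x) x := fun x => (hφdiff x).hasDerivAt
  have hψx : ∀ x, HasDerivAt ψ (deriv ψ x) x := fun x => (hψdiff x).hasDerivAt
  have habsL : |(-L : ℝ)| = L := by rw [abs_neg, abs_of_pos hL]
  have habsL' : |(L : ℝ)| = L := abs_of_pos hL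
  have hne : ∀ x : ℝ, |x| ≠ L → x ≠ -L ∧ x ≠ L := by
    intro x hx
    exact ⟨fun h => hx (h ▸ habsL), fun h => hx (h ▸ habsL')⟩
  set V : ℝ → ℝ := fun x => deriv ψ x * deriv φ x - ψ x * (Dfun L 0 x * Real.sin (φ x))
    with hVdef
  set F₁ : ℝ → ℝ := fun x => deriv ψ x * deriv φ x - ψ x * Real.sin (φ x) with hF₁def
  set F₂ : ℝ → ℝ := fun x => deriv ψ x * deriv φ x with hF₂def
  have hVeq1 : ∀ x : ℝ, L ≤ |x| → V x = F₁ x := by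
    intro x hx
    simp only [hVdef, hF₁def, Dfun, if_neg (not_lt.mpr hx), one_mul]
  have hVeq0 : ∀ x : ℝ, |x| < L → V x = F₂ x := by
    intro x hx
    simp only [hVdef, hF₂def, Dfun, if_pos hx, zero_mul, mul_zero, sub_zero]
  have hF1c : Continuous F₁ :=
    (hψ'cont.mul hucont).sub (hψcont.mul (Real.continuous_sin.comp hφ1.continuous))
  have hF2c : Continuous F₂ := hψ'cont.mul hucont
  have hF1d : ∀ x : ℝ, L < |x| → HasDerivAt F₁ (Λ * ψ x * deriv φ x) x := by
    intro x hx
    obtain ⟨h1, h2⟩ := hne x (ne_of_gt hx)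
    have hψ'' := hODEψ x h1 h2
    have hφ'' := hODEφ x h1 h2
    simp only [Dfun, if_neg (not_lt.mpr hx.le), one_mul] at hψ'' hφ''
    have hs : HasDerivAt (fun y => Real.sin (φ y)) (Real.cos (φ x) * deriv φ x) x :=
      (Real.hasDerivAt_sin (φ x)).comp x (hφx x)
    have h3 := (hψ''.fun_mul hφ'').fun_sub ((hψx x).fun_mul hs)
    exact h3.congr_deriv (by ring)
  have hF2d : ∀ x : ℝ, |x| < L → HasDerivAt F₂ (Λ * ψ x * deriv φ x) x := by
    intro x hx
    obtain ⟨h1, h2⟩ := hne x (ne_of_lt hx)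
    have hψ'' := hODEψ x h1 h2
    have hφ'' := hODEφ x h1 h2
    simp only [Dfun, if_pos hx, zero_mul, mul_zero, add_zero] at hψ'' hφ''
    have h3 := hψ''.fun_mul hφ''
    exact h3.congr_deriv (by ring)
  -- monotonicity pieces
  have hm1 : ∀ x y : ℝ, x ≤ y → y ≤ -L → (∀ t ∈ Icc x y, 0 ≤ ψ t) → V x ≤ V y := by
    intro x y hxy hyL hnn
    have habs : ∀ t : ℝ, t ≤ -L → L ≤ |t| := by
      intro t ht
      rw [abs_of_nonpos (by linarith)]
      linarith
    rw [hVeq1 x (habs x (le_trans hxy hyL)), hVeq1 y (habs y hyL)]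
    have hmono := monoOn' (f' := fun t => Λ * ψ t * deriv φ t) hF1c.continuousOn
      (fun t ht => hF1d t (by
        rw [abs_of_nonpos (by linarith [ht.2] : t ≤ 0)]
        linarith [ht.2]))
      (fun t ht => mul_nonneg (mul_nonneg hΛ.le (hnn t ⟨ht.1.le, ht.2.le⟩)) (hupos t).le)
    exact hmono (left_mem_Icc.2 hxy) (right_mem_Icc.2 hxy) hxy
  have hm3 : ∀ x y : ℝ, L ≤ x → x ≤ y → (∀ t ∈ Icc x y, 0 ≤ ψ t) → V x ≤ V y := by
    intro x y hLx hxy hnn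
    have habs : ∀ t : ℝ, L ≤ t → L ≤ |t| := by
      intro t ht
      rw [abs_of_nonneg (by linarith)]
      exact ht
    rw [hVeq1 x (habs x hLx), hVeq1 y (habs y (le_trans hLx hxy))]
    have hmono := monoOn' (f' := fun t => Λ * ψ t * deriv φ t) hF1c.continuousOn
      (fun t ht => hF1d t (by
        rw [abs_of_nonneg (by linarith [ht.1] : (0:ℝ) ≤ t)]
        linarith [ht.1]))
      (fun t ht => mul_nonneg (mul_nonneg hΛ.le (hnn t ⟨ht.1.le, ht.2.le⟩)) (hupos t).le)
    exact hmono (left_mem_Icc.2 hxy) (right_mem_Icc.2 hxy) hxy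
  have hm2 : ∀ x y : ℝ, -L ≤ x → x ≤ y → y ≤ L → (∀ t ∈ Icc x y, 0 ≤ ψ t) → V x ≤ V y := by
    intro x y hLx hxy hyL hnn
    rcases eq_or_lt_of_le hxy with rfl | hlt
    · exact le_rfl
    have hmono := monoOn' (f' := fun t => Λ * ψ t * deriv φ t) hF2c.continuousOn
      (fun t ht => hF2d t (abs_lt.mpr ⟨by linarith [ht.1], by linarith [ht.2]⟩))
      (fun t ht => mul_nonneg (mul_nonneg hΛ.le (hnn t ⟨ht.1.le, ht.2.le⟩)) (hupos t).le)
    have step1 : V x ≤ F₂ x := by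
      rcases eq_or_lt_of_le hLx with h | h
      · subst h
        rw [hVeq1 (-L) (by rw [habsL]), hF₁def, hF₂def]
        simp only []
        nlinarith [mul_nonneg (hnn (-L) (left_mem_Icc.2 hxy)) hsm]
      · rw [hVeq0 x (abs_lt.mpr ⟨h, lt_of_lt_of_le hlt hyL⟩)]
    have step2 : F₂ y ≤ V y := by
      rcases eq_or_lt_of_le hyL with h | h
      · rw [h, hVeq1 L (by rw [habsL']), hF₁def, hF₂def]
        simp only []
        have h9 : 0 ≤ ψ L := h ▸ hnn y (right_mem_Icc.2 hxy)
        nlinarith [mul_nonpos_of_nonneg_of_nonpos h9 hsL]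
      · rw [hVeq0 y (abs_lt.mpr ⟨lt_of_le_of_lt hLx hlt, h⟩)]
    calc V x ≤ F₂ x := step1
      _ ≤ F₂ y := hmono (left_mem_Icc.2 hxy) (right_mem_Icc.2 hxy) hxy
      _ ≤ V y := step2
  have hVmono : ∀ x y : ℝ, x ≤ y → (∀ t ∈ Icc x y, 0 ≤ ψ t) → V x ≤ V y := by
    intro x y hxy hnn
    rcases le_or_gt y (-L) with h1 | h1
    · exact hm1 x y hxy h1 hnn
    · rcases le_or_gt x (-L) with h2 | h2
      · have ha : V x ≤ V (-L) := hm1 x (-L) h2 le_rfl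
          (fun t ht => hnn t ⟨ht.1, le_trans ht.2 h1.le⟩)
        rcases le_or_gt y L with h3 | h3
        · have hb : V (-L) ≤ V y := hm2 (-L) y le_rfl h1.le h3
            (fun t ht => hnn t ⟨le_trans h2 ht.1, ht.2⟩)
          linarith
        · have hb : V (-L) ≤ V L := hm2 (-L) L le_rfl (by linarith) le_rfl
            (fun t ht => hnn t ⟨le_trans h2 ht.1, le_trans ht.2 h3.le⟩)
          have hc : V L ≤ V y := hm3 L y le_rfl h3.le
            (fun t ht => hnn t ⟨le_trans (by linarith : x ≤ L) ht.1, ht.2⟩)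
          linarith
      · rcases le_or_gt y L with h3 | h3
        · exact hm2 x y h2.le hxy h3 hnn
        · rcases le_or_gt x L with h4 | h4
          · have hb : V x ≤ V L := hm2 x L h2.le h4 le_rfl
              (fun t ht => hnn t ⟨ht.1, le_trans ht.2 h3.le⟩)
            have hc : V L ≤ V y := hm3 L y le_rfl h3.le
              (fun t ht => hnn t ⟨le_trans h4 ht.1, ht.2⟩)
            linarith
          · exact hm3 x y h4.le hxy hnn
  -- limits of V at ±∞
  have hbdd : ∀ t : ℝ, |ψ t * (Dfun L 0 t * Real.sin (φ t))| ≤ |ψ t| := by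
    intro t
    rw [abs_mul]
    have h1 : |Dfun L 0 t * Real.sin (φ t)| ≤ 1 := by
      rw [abs_mul, Dfun]
      split
      · simp
      · rw [abs_one, one_mul]
        exact Real.abs_sin_le_one _
    nlinarith [abs_nonneg (ψ t), abs_nonneg (Dfun L 0 t * Real.sin (φ t))]
  have hVtop : Tendsto V atTop (𝓝 0) := by
    have h1 : Tendsto (fun t => deriv ψ t * deriv φ t) atTop (𝓝 0) := by
      simpa using hψ'top.mul hutop
    have h2 : Tendsto (fun t => ψ t * (Dfun L 0 t * Real.sin (φ t))) atTop (𝓝 0) := by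
      rw [tendsto_zero_iff_abs_tendsto_zero]
      refine squeeze_zero (fun t => abs_nonneg _) (fun t => hbdd t) ?_
      simpa using hψtop.abs
    simpa using h1.sub h2
  have hVbot : Tendsto V atBot (𝓝 0) := by
    have h1 : Tendsto (fun t => deriv ψ t * deriv φ t) atBot (𝓝 0) := by
      simpa using hψ'bot.mul hubot
    have h2 : Tendsto (fun t => ψ t * (Dfun L 0 t * Real.sin (φ t))) atBot (𝓝 0) := by
      rw [tendsto_zero_iff_abs_tendsto_zero]
      refine squeeze_zero (fun t => abs_nonneg _) (fun t => hbdd t) ?_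
      simpa using hψbot.abs
    simpa using h1.sub h2
  -- derivative sign at boundary zeros
  have hslope_le : ∀ w β : ℝ, w < β → ψ β = 0 → (∀ t ∈ Ico w β, 0 ≤ ψ t) →
      deriv ψ β ≤ 0 := by
    intro w β hwβ hβ0 hnn
    have hd : HasDerivWithinAt ψ (deriv ψ β) (Iio β) β := (hψx β).hasDerivWithinAt
    rw [hasDerivWithinAt_iff_tendsto_slope] at hd
    have hsub : Iio β \ {β} = Iio β := Set.diff_singleton_eq_self (by simp)
    rw [hsub] at hd
    refine le_of_tendsto hd ?_
    filter_upwards [Ioo_mem_nhdsLT_of_mem (⟨hwβ, le_rfl⟩ : β ∈ Ioc w β)] with t ht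
    rw [slope_def_field]
    apply div_nonpos_of_nonneg_of_nonpos
    · rw [hβ0, sub_zero]
      exact hnn t ⟨ht.1.le, ht.2⟩
    · linarith [ht.2]
  have hslope_ge : ∀ w α : ℝ, α < w → ψ α = 0 → (∀ t ∈ Ioc α w, 0 ≤ ψ t) →
      0 ≤ deriv ψ α := by
    intro w α hαw hα0 hnn
    have hd : HasDerivWithinAt ψ (deriv ψ α) (Ioi α) α := (hψx α).hasDerivWithinAt
    rw [hasDerivWithinAt_iff_tendsto_slope] at hd
    have hsub : Ioi α \ {α} = Ioi α := Set.diff_singleton_eq_self (by simp)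
    rw [hsub] at hd
    refine ge_of_tendsto hd ?_
    filter_upwards [Ioo_mem_nhdsGT_of_mem (⟨le_rfl, hαw⟩ : α ∈ Ico α w)] with t ht
    rw [slope_def_field]
    apply div_nonneg
    · rw [hα0, sub_zero]
      exact hnn t ⟨ht.1, ht.2.le⟩
    · linarith [ht.1]
  -- main claim : V vanishes wherever ψ > 0
  have hClaim : ∀ x : ℝ, 0 < ψ x → V x = 0 := by
    intro x hx
    have hright : V x ≤ 0 := by
      by_cases hS : ∃ t, x ≤ t ∧ ψ t = 0
      · set S := {t : ℝ | x ≤ t ∧ ψ t = 0} with hSdef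
        have hScl : IsClosed S := by
          have : S = Ici x ∩ ψ ⁻¹' {0} := by
            ext t; simp [hSdef]
          rw [this]
          exact isClosed_Ici.inter (isClosed_singleton.preimage hψcont)
        have hSne : S.Nonempty := hS
        have hSbd : BddBelow S := ⟨x, fun t ht => ht.1⟩
        set β := sInf S with hβdef
        have hβS : β ∈ S := hScl.csInf_mem hSne hSbd
        have hxβ : x < β := lt_of_le_of_ne hβS.1 (fun h => hx.ne' (by rw [h]; exact hβS.2))
        have hnn : ∀ t ∈ Ico x β, 0 ≤ ψ t := by
          intro t ht
          by_contra hneg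
          push_neg at hneg
          obtain ⟨c, hc1, hc2⟩ := intermediate_value_Icc' ht.1 hψcont.continuousOn
            ⟨hneg.le, hx.le⟩
          have hcβ : β ≤ c := csInf_le hSbd ⟨hc1.1, hc2⟩
          linarith [hc1.2, ht.2]
        have hnn' : ∀ t ∈ Icc x β, 0 ≤ ψ t := by
          intro t ht
          rcases lt_or_eq_of_le ht.2 with h | h
          · exact hnn t ⟨ht.1, h⟩
          · rw [h, hβS.2]
        have h1 : V x ≤ V β := hVmono x β hxβ.le hnn'
        have h2 : V β ≤ 0 := by
          have hψ'β : deriv ψ β ≤ 0 := hslope_le x β hxβ hβS.2 hnn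
          have hVβ : V β = deriv ψ β * deriv φ β := by
            rw [hVdef]
            simp [hβS.2]
          rw [hVβ]
          exact mul_nonpos_of_nonpos_of_nonneg hψ'β (hupos β).le
        linarith
      · push_neg at hS
        have hpos : ∀ t, x ≤ t → 0 ≤ ψ t := by
          intro t ht
          by_contra hneg
          push_neg at hneg
          obtain ⟨c, hc1, hc2⟩ := intermediate_value_Icc' ht hψcont.continuousOn
            ⟨hneg.le, hx.le⟩
          exact hS c hc1.1 hc2
        refine ge_of_tendsto hVtop ?_
        filter_upwards [eventually_ge_atTop x] with t ht
        exact hVmono x t ht (fun s hs => hpos s hs.1)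
    have hleft : 0 ≤ V x := by
      by_cases hS : ∃ t, t ≤ x ∧ ψ t = 0
      · set S := {t : ℝ | t ≤ x ∧ ψ t = 0} with hSdef
        have hScl : IsClosed S := by
          have : S = Iic x ∩ ψ ⁻¹' {0} := by
            ext t; simp [hSdef]
          rw [this]
          exact isClosed_Iic.inter (isClosed_singleton.preimage hψcont)
        have hSne : S.Nonempty := hS
        have hSbd : BddAbove S := ⟨x, fun t ht => ht.1⟩
        set α := sSup S with hαdef
        have hαS : α ∈ S := hScl.csSup_mem hSne hSbd
        have hαx : α < x := lt_of_le_of_ne hαS.1 (fun h => hx.ne' (by rw [← h]; exact hαS.2))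
        have hnn : ∀ t ∈ Ioc α x, 0 ≤ ψ t := by
          intro t ht
          by_contra hneg
          push_neg at hneg
          obtain ⟨c, hc1, hc2⟩ := intermediate_value_Icc ht.2 hψcont.continuousOn
            ⟨hneg.le, hx.le⟩
          have hcα : c ≤ α := le_csSup hSbd ⟨hc1.2, hc2⟩
          linarith [hc1.1, ht.1]
        have hnn' : ∀ t ∈ Icc α x, 0 ≤ ψ t := by
          intro t ht
          rcases eq_or_lt_of_le ht.1 with h | h
          · rw [← h, hαS.2]
          · exact hnn t ⟨h, ht.2⟩
        have h1 : V α ≤ V x := hVmono α x hαx.le hnn'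
        have h2 : 0 ≤ V α := by
          have hψ'α : 0 ≤ deriv ψ α := hslope_ge x α hαx hαS.2 hnn
          have hVα : V α = deriv ψ α * deriv φ α := by
            rw [hVdef]
            simp [hαS.2]
          rw [hVα]
          exact mul_nonneg hψ'α (hupos α).le
        linarith
      · push_neg at hS
        have hpos : ∀ t, t ≤ x → 0 ≤ ψ t := by
          intro t ht
          by_contra hneg
          push_neg at hneg
          obtain ⟨c, hc1, hc2⟩ := intermediate_value_Icc ht hψcont.continuousOn
            ⟨hneg.le, hx.le⟩
          exact hS c hc1.2 hc2
        refine le_of_tendsto hVbot ?_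
        filter_upwards [eventually_le_atBot x] with t ht
        exact hVmono t x ht (fun s hs => hpos s hs.2)
    linarith
  -- final contradiction
  have hopen : IsOpen {t : ℝ | 0 < ψ t} := isOpen_lt continuous_const hψcont
  obtain ⟨ε, hε, hball⟩ := Metric.isOpen_iff.mp hopen x₀ hx₀
  obtain ⟨x₁, hx₁mem, hx₁ne⟩ : ∃ x₁, x₁ ∈ Metric.ball x₀ ε ∧ x₁ ≠ -L ∧ x₁ ≠ L := by
    by_cases c1 : x₀ ≠ -L ∧ x₀ ≠ L
    · exact ⟨x₀, Metric.mem_ball_self hε, c1⟩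
    · by_cases c2 : (x₀ + ε/2) ≠ -L ∧ (x₀ + ε/2) ≠ L
      · refine ⟨x₀ + ε/2, ?_, c2⟩
        rw [Metric.mem_ball, Real.dist_eq]
        rw [abs_of_pos (by linarith : (0:ℝ) < x₀ + ε/2 - x₀)]
        linarith
      · push_neg at c1 c2
        refine ⟨x₀ + ε/4, ?_, ?_, ?_⟩
        · rw [Metric.mem_ball, Real.dist_eq]
          rw [abs_of_pos (by linarith : (0:ℝ) < x₀ + ε/4 - x₀)]
          linarith
        · intro hc
          rcases Classical.em (x₀ = -L) with h | h
          · rw [h] at hc; linarith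
          · have h0 : x₀ = L := c1 h
            rw [h0] at hc
            linarith
        · intro hc
          rcases Classical.em (x₀ = L) with h | h
          · rw [h] at hc; linarith
          · have h0 : x₀ = -L := by
              by_contra hcon
              exact h (c1 hcon)
            have h2 : x₀ + ε/2 = L := c2 (by
              intro hc2
              rw [h0] at hc2
              linarith)
            rw [h0] at hc
            rw [h0] at h2
            linarith
  have hx₁pos : 0 < ψ x₁ := hball hx₁mem
  have hx₁abs : |x₁| ≠ L := by
    intro h
    rcases abs_eq hL.le |>.mp h with h' | h'
    · exact hx₁ne.2 h'
    · exact hx₁ne.1 h'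
  have hVd : HasDerivAt V (Λ * ψ x₁ * deriv φ x₁) x₁ := by
    rcases lt_or_gt_of_ne hx₁abs with h | h
    · refine (hF2d x₁ h).congr_of_eventuallyEq ?_
      have hop : IsOpen {t : ℝ | |t| < L} := isOpen_lt continuous_abs continuous_const
      filter_upwards [hop.mem_nhds h] with t ht
      exact hVeq0 t ht
    · refine (hF1d x₁ h).congr_of_eventuallyEq ?_
      have hop : IsOpen {t : ℝ | L < |t|} := isOpen_lt continuous_const continuous_abs
      filter_upwards [hop.mem_nhds h] with t ht
      exact hVeq1 t ht.le
  have hVzero : HasDerivAt V 0 x₁ := by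
    refine (hasDerivAt_const x₁ (0:ℝ)).congr_of_eventuallyEq ?_
    filter_upwards [hopen.mem_nhds hx₁pos] with t ht
    exact hClaim t ht
  have hfinal := hVd.unique hVzero
  have : 0 < Λ * ψ x₁ * deriv φ x₁ := mul_pos (mul_pos hΛ hx₁pos) (hupos x₁)
  rw [hfinal] at this
  exact lt_irrefl 0 this



/-- For all `μ > 1`, `T ∈ (0,1)`, `y ≥ 0`, the matching equation
`−μ(μ+T) + (1−T²) = √(μ²−1)·(μ+T)·tanh y` has no solution: the left-hand side is
`≤ −T − T² < 0` while the right-hand side is `≥ 0`. Consequently, for `γ = 0` and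
`d = 0`, the linearisation about the (unique) pinned fluxon with half-length `L > 0`
has no eigenvalue `Λ > 0`. -/
theorem stmt10 :
    (∀ μ T y : ℝ, 1 < μ → T ∈ Set.Ioo (0 : ℝ) 1 → 0 ≤ y →
      (-μ * (μ + T) + (1 - T ^ 2) ≤ -T - T ^ 2 ∧
       -T - T ^ 2 < 0 ∧
       0 ≤ Real.sqrt (μ ^ 2 - 1) * (μ + T) * Real.tanh y ∧
       -μ * (μ + T) + (1 - T ^ 2) ≠ Real.sqrt (μ ^ 2 - 1) * (μ + T) * Real.tanh y)) ∧
    (∀ L : ℝ, 0 < L → ∀ φ : ℝ → ℝ, IsPinnedFluxon L 0 0 φ →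
      ∀ Λ : ℝ, IsEigenvalue L 0 0 φ Λ → ¬ 0 < Λ) := by
  constructor
  · intro μ T y hμ hT hy
    have h1 : -μ * (μ + T) + (1 - T ^ 2) ≤ -T - T ^ 2 := by nlinarith [hT.1, hT.2]
    have h2 : -T - T ^ 2 < 0 := by nlinarith [hT.1]
    have h3 : 0 ≤ Real.sqrt (μ ^ 2 - 1) * (μ + T) * Real.tanh y := by
      refine mul_nonneg (mul_nonneg (Real.sqrt_nonneg _) (by linarith [hT.1])) ?_
      rw [Real.tanh_eq_sinh_div_cosh]
      exact div_nonneg (Real.sinh_nonneg_iff.mpr hy) (Real.cosh_pos y).le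
    exact ⟨h1, h2, h3, ne_of_lt (lt_of_lt_of_le (lt_of_le_of_lt h1 h2) h3)⟩
  · rintro L hL φ hφ Λ ⟨ψ, hψ0, hψ1, hψ2, hψb, hψt, hψ'b, hψ't⟩ hΛ
    obtain ⟨hupos, hsm, hsL⟩ := fluxon_facts hL hφ
    obtain ⟨hφ1, hφ2, hφ3, hφ4, hφ5, hφ6⟩ := hφ
    have hODEφ : ∀ x, x ≠ -L → x ≠ L →
        HasDerivAt (deriv φ) (Dfun L 0 x * Real.sin (φ x)) x := by
      intro x h1 h2
      obtain ⟨c, hc, he⟩ := hφ2 x h1 h2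
      have : c = Dfun L 0 x * Real.sin (φ x) := by linarith
      rwa [this] at hc
    have hODEψ : ∀ x, x ≠ -L → x ≠ L →
        HasDerivAt (deriv ψ) (Λ * ψ x + Dfun L 0 x * Real.cos (φ x) * ψ x) x := by
      intro x h1 h2
      obtain ⟨c, hc, he⟩ := hψ2 x h1 h2
      have : c = Λ * ψ x + Dfun L 0 x * Real.cos (φ x) * ψ x := by linarith
      rwa [this] at hc
    obtain ⟨x₀, hx₀⟩ := Function.ne_iff.mp hψ0
    rcases lt_or_gt_of_ne hx₀ with hneg | hpos
    · -- ψ x₀ < 0 : apply eig_false to -ψ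
      have hderiv_neg : deriv (fun x => -ψ x) = fun x => -(deriv ψ x) := deriv.neg'
      have hODEψn : ∀ x, x ≠ -L → x ≠ L →
          HasDerivAt (deriv (fun x => -ψ x))
            (Λ * (-ψ x) + Dfun L 0 x * Real.cos (φ x) * (-ψ x)) x := by
        intro x h1 h2
        rw [hderiv_neg]
        have := (hODEψ x h1 h2).fun_neg
        exact this.congr_deriv (by ring)
      refine eig_false hL hΛ hφ1 hODEφ hupos hφ5 hφ6 hsm hsL hψ1.neg hODEψn
        (by simpa using hψb.neg) (by simpa using hψt.neg)
        (by rw [hderiv_neg]; simpa using hψ'b.neg)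
        (by rw [hderiv_neg]; simpa using hψ't.neg)
        (x₀ := x₀) (by simpa using hneg)
    · exact eig_false hL hΛ hφ1 hODEφ hupos hφ5 hφ6 hsm hsL hψ1 hODEψ
        hψb hψt hψ'b hψ't (x₀ := x₀) hpos
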